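/- Strict improvement under simultaneous charging and discharging with lossy storage: if P_ch > 0, P_dch > 0, and η_ch·η_dch < 1, then the change in net discharge power under the EEC transform is strictly positive: (P̃_dch − P̃_ch) − (P_dch − P_ch) > 0. -/

import Mathlib

/-- Strict improvement under simultaneous charging and discharging with lossy storage. -/
theorem eec_strict_improvement
    (Pch Pdch ηch ηdch ΔT : ℝ)
    (hPch : 0 < Pch) (hPdch : 0 < Pdch)
    (hηch : ηch ∈ Set.Ioo (0:ℝ) 1) (hηdch : ηdch ∈ Set.Ioo (0:ℝ) 1)
    (hloss : ηch * ηdch < 1)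
    (hΔT : 0 < ΔT) :
    let ΔE := ΔT * (Pch * ηch - Pdch / ηdch)
    let Pch' := if 0 ≤ ΔE then ΔE / (ηch * ΔT) else 0
    let Pdch' := if 0 ≤ ΔE then 0 else -ΔE * ηdch / ΔT
    (Pdch' - Pch') - (Pdch - Pch) > 0 := by
  obtain ⟨hc0, hc1⟩ := hηch
  obtain ⟨hd0, hd1⟩ := hηdch
  intro ΔE Pch' Pdch'
  simp only [Pch', Pdch', ΔE]
  split_ifs with h
  · have : ΔT * (Pch * ηch - Pdch / ηdch) / (ηch * ΔT)
        = Pch - Pdch / (ηch * ηdch) := by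
      field_simp
    rw [this]
    have hpos : 0 < ηch * ηdch := mul_pos hc0 hd0
    rw [div_eq_mul_inv]
    nlinarith [mul_pos hPdch (sub_pos.mpr ((one_lt_inv₀ hpos).mpr hloss))]
  · have : -(ΔT * (Pch * ηch - Pdch / ηdch)) * ηdch / ΔT
        = Pdch - Pch * (ηch * ηdch) := by
      field_simp; ring
    rw [this]
    nlinarith
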